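/- Divergence of the lower-LIL events: let 0 < η < 1 be real and let γ ≥ 2 be a natural number with (γ−1)/γ > η. Set n_r = γ^r, D_r(X) = S_{n_r}(X) − S_{n_{r−1}}(X), and for r large enough that log log n_r > 0 define A_r = {X ∈ 2^ℕ : D_r(X) − (n_r − n_{r−1})/2 > η·√((n_r/2)·log log n_r)}. Then the events (A_r) are mutually independent and Σ_r μ(A_r) = ∞. -/

import Mathlib

open MeasureTheory Filter

/-- The sum of the first `n` coordinates of a point of Cantor space, as a real number. -/
noncomputable def coinSum (X : ℕ → Bool) (n : ℕ) : ℝ :=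
  ∑ i ∈ Finset.range n, ((X i).toNat : ℝ)

/-- `μ` is the fair-coin measure on Cantor space: the probability measure under which the
coordinates are i.i.d. Bernoulli(1/2), i.e. every finite cylinder determined by prescribing
the coordinates in a finite set `s` has measure `(1/2)^|s|`. -/
def IsFairCoin (μ : Measure (ℕ → Bool)) : Prop :=
  IsProbabilityMeasure μ ∧
    ∀ (s : Finset ℕ) (f : ℕ → Bool),
      μ {X | ∀ i ∈ s, X i = f i} = (1 / 2) ^ s.card
/-- The block increment `D_r(X) = S_{γ^r}(X) − S_{γ^{r−1}}(X)`. -/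
noncomputable def blockIncr (γ : ℕ) (r : ℕ) (X : ℕ → Bool) : ℝ :=
  coinSum X (γ ^ r) - coinSum X (γ ^ (r - 1))

/-- The lower-LIL event `A_r` for parameters `η` and `γ`, with `n_r = γ^r`:
the set of `X` with `D_r(X) − (n_r − n_{r−1})/2 > η √((n_r/2) log log n_r)`. -/
def lowerLILEvent (η : ℝ) (γ : ℕ) (r : ℕ) : Set (ℕ → Bool) :=
  {X | η * Real.sqrt ((γ ^ r / 2) * Real.log (Real.log (γ ^ r)))
        < blockIncr γ r X - ((γ ^ r : ℕ) - (γ ^ (r - 1) : ℕ) : ℝ) / 2}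

namespace LILaux

open Finset

noncomputable section
open scoped Classical

/-- restriction of `X` to coordinates in `s`, extended by `false`. -/
def mask (s : Finset ℕ) (X : ℕ → Bool) : ℕ → Bool := fun i => if i ∈ s then X i else false

/-- all functions supported on `s`. -/
def patterns (s : Finset ℕ) : Finset (ℕ → Bool) :=
  (s.pi fun _ => (Finset.univ : Finset Bool)).image
    (fun g i => if h : i ∈ s then g i h else false)

lemma mem_patterns {s : Finset ℕ} {f : ℕ → Bool} :
    f ∈ patterns s ↔ ∀ i ∉ s, f i = false := by
  constructor
  · rintro hf i hi
    obtain ⟨g, -, rfl⟩ := Finset.mem_image.1 hf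
    simp [hi]
  · intro h
    refine Finset.mem_image.2 ⟨fun i _ => f i, ?_, ?_⟩
    · exact Finset.mem_pi.2 fun i _ => Finset.mem_univ _
    · funext i
      by_cases hi : i ∈ s
      · simp [hi]
      · simp [hi, h i hi]

lemma mask_mem_patterns (s : Finset ℕ) (X : ℕ → Bool) : mask s X ∈ patterns s :=
  mem_patterns.2 fun i hi => by simp [mask, hi]

lemma patterns_ext {s : Finset ℕ} {f g : ℕ → Bool} (hf : f ∈ patterns s) (hg : g ∈ patterns s)
    (h : ∀ i ∈ s, f i = g i) : f = g := by
  funext i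
  by_cases hi : i ∈ s
  · exact h i hi
  · rw [mem_patterns.1 hf i hi, mem_patterns.1 hg i hi]

lemma card_patterns (s : Finset ℕ) : (patterns s).card = 2 ^ s.card := by
  rw [patterns, Finset.card_image_of_injOn, Finset.card_pi]
  · simp
  · intro g hg g' hg' h
    funext i hi
    have := congrFun h i
    simpa [hi] using this

lemma mask_mask {s u : Finset ℕ} (h : s ⊆ u) (X : ℕ → Bool) :
    mask s (mask u X) = mask s X := by
  funext i
  by_cases hi : i ∈ s
  · simp [mask, hi, h hi]
  · simp [mask, hi]

/-- `E` depends only on coordinates in `s`. -/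
def DependsOn (s : Finset ℕ) (E : Set (ℕ → Bool)) : Prop :=
  ∀ X, mask s X ∈ E ↔ X ∈ E

lemma DependsOn.mono {s u : Finset ℕ} {E : Set (ℕ → Bool)} (hE : DependsOn s E) (h : s ⊆ u) :
    DependsOn u E := by
  intro X
  rw [← hE (mask u X), mask_mask h, hE]

/-- the set of patterns on `s` belonging to `E`. -/
def patFor (s : Finset ℕ) (E : Set (ℕ → Bool)) : Finset (ℕ → Bool) :=
  (patterns s).filter (· ∈ E)

lemma mem_patFor {s : Finset ℕ} {E : Set (ℕ → Bool)} {f : ℕ → Bool} :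
    f ∈ patFor s E ↔ f ∈ patterns s ∧ f ∈ E := by
  unfold patFor; exact Finset.mem_filter

lemma measurableSet_cyl (s : Finset ℕ) (f : ℕ → Bool) :
    MeasurableSet {X : ℕ → Bool | ∀ i ∈ s, X i = f i} := by
  have : {X : ℕ → Bool | ∀ i ∈ s, X i = f i} = ⋂ i ∈ s, (fun X : ℕ → Bool => X i) ⁻¹' {f i} := by
    ext X; simp
  rw [this]
  exact MeasurableSet.biInter s.countable_toSet fun i _ =>
    (measurable_pi_apply i) (measurableSet_singleton (f i))

lemma meas_eq {μ : Measure (ℕ → Bool)} (hμ : IsFairCoin μ) (s : Finset ℕ) (E : Set (ℕ → Bool))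
    (hE : DependsOn s E) :
    μ E = (patFor s E).card * (1 / 2 : ENNReal) ^ s.card := by
  have hdecomp : E = ⋃ f ∈ patFor s E, {X : ℕ → Bool | ∀ i ∈ s, X i = f i} := by
    ext X
    simp only [Set.mem_iUnion, Set.mem_setOf_eq, exists_prop]
    constructor
    · intro hX
      refine ⟨mask s X, ?_, fun i hi => by simp [mask, hi]⟩
      exact mem_patFor.2 ⟨mask_mem_patterns s X, (hE X).2 hX⟩
    · rintro ⟨f, hf, hXf⟩
      obtain ⟨hf1, hf2⟩ := mem_patFor.1 hf
      have : mask s X = f := by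
        refine patterns_ext (mask_mem_patterns s X) hf1 fun i hi => ?_
        simp [mask, hi, hXf i hi]
      exact (hE X).1 (this ▸ hf2)
  conv_lhs => rw [hdecomp]
  rw [measure_biUnion_finset ?_ (fun f _ => measurableSet_cyl s f)]
  · rw [Finset.sum_congr rfl fun f _ => hμ.2 s f, Finset.sum_const, nsmul_eq_mul]
  · intro f hf g hg hfg
    simp only [Function.onFun, Set.disjoint_left]
    intro X hXf hXg
    exact hfg (patterns_ext (mem_patFor.1 hf).1 (mem_patFor.1 hg).1
      fun i hi => (hXf i hi).symm.trans (hXg i hi))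

lemma patFor_card_union {s t : Finset ℕ} {E F : Set (ℕ → Bool)} (hst : Disjoint s t)
    (hE : DependsOn s E) (hF : DependsOn t F) :
    (patFor (s ∪ t) (E ∩ F)).card = (patFor s E).card * (patFor t F).card := by
  rw [← Finset.card_product]
  apply Finset.card_bij' (fun h _ => (mask s h, mask t h))
    (fun p _ => fun i => p.1 i || p.2 i)
  · -- hi : maps into product
    intro h hh
    obtain ⟨hp, hEF⟩ := mem_patFor.1 hh
    refine Finset.mem_product.2 ⟨mem_patFor.2 ⟨mask_mem_patterns _ _, ?_⟩,
      mem_patFor.2 ⟨mask_mem_patterns _ _, ?_⟩⟩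
    · exact (hE h).2 hEF.1
    · exact (hF h).2 hEF.2
  · -- hj : maps back
    intro p hp
    obtain ⟨hp1, hp2⟩ := Finset.mem_product.1 hp
    obtain ⟨hp1a, hp1b⟩ := mem_patFor.1 hp1
    obtain ⟨hp2a, hp2b⟩ := mem_patFor.1 hp2
    have hm1 : mask s (fun i => p.1 i || p.2 i) = p.1 := by
      funext i
      by_cases hi : i ∈ s
      · have : p.2 i = false := mem_patterns.1 hp2a i (Finset.disjoint_left.1 hst hi)
        simp [mask, hi, this]
      · simp [mask, hi, (mem_patterns.1 hp1a i hi).symm]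
    have hm2 : mask t (fun i => p.1 i || p.2 i) = p.2 := by
      funext i
      by_cases hi : i ∈ t
      · have : p.1 i = false := mem_patterns.1 hp1a i (Finset.disjoint_right.1 hst hi)
        simp [mask, hi, this]
      · simp [mask, hi, (mem_patterns.1 hp2a i hi).symm]
    refine mem_patFor.2 ⟨?_, ?_, ?_⟩
    · refine mem_patterns.2 fun i hi => ?_
      simp only [Finset.mem_union, not_or] at hi
      rw [mem_patterns.1 hp1a i hi.1, mem_patterns.1 hp2a i hi.2]
      rfl
    · exact (hE _).1 (by rw [hm1]; exact hp1b)
    · exact (hF _).1 (by rw [hm2]; exact hp2b)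
  · -- left inverse
    intro h hh
    obtain ⟨hp, -⟩ := mem_patFor.1 hh
    funext i
    by_cases his : i ∈ s
    · have hit : i ∉ t := Finset.disjoint_left.1 hst his
      simp [mask, his, hit]
    · by_cases hit : i ∈ t
      · simp [mask, his, hit]
      · simp [mask, his, hit, mem_patterns.1 hp i (by simp [his, hit])]
  · -- right inverse
    intro p hp
    obtain ⟨hp1, hp2⟩ := Finset.mem_product.1 hp
    obtain ⟨hp1a, -⟩ := mem_patFor.1 hp1
    obtain ⟨hp2a, -⟩ := mem_patFor.1 hp2
    have hm1 : mask s (fun i => p.1 i || p.2 i) = p.1 := by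
      funext i
      by_cases hi : i ∈ s
      · have : p.2 i = false := mem_patterns.1 hp2a i (Finset.disjoint_left.1 hst hi)
        simp [mask, hi, this]
      · simp [mask, hi, (mem_patterns.1 hp1a i hi).symm]
    have hm2 : mask t (fun i => p.1 i || p.2 i) = p.2 := by
      funext i
      by_cases hi : i ∈ t
      · have : p.1 i = false := mem_patterns.1 hp1a i (Finset.disjoint_right.1 hst hi)
        simp [mask, hi, this]
      · simp [mask, hi, (mem_patterns.1 hp2a i hi).symm]
    rw [hm1, hm2]

lemma DependsOn.inter {s : Finset ℕ} {E F : Set (ℕ → Bool)} (hE : DependsOn s E)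
    (hF : DependsOn s F) : DependsOn s (E ∩ F) := fun X => by
  simp only [Set.mem_inter_iff, hE X, hF X]

lemma meas_inter {μ : Measure (ℕ → Bool)} (hμ : IsFairCoin μ) {s t : Finset ℕ}
    {E F : Set (ℕ → Bool)} (hst : Disjoint s t) (hE : DependsOn s E) (hF : DependsOn t F) :
    μ (E ∩ F) = μ E * μ F := by
  rw [meas_eq hμ s E hE, meas_eq hμ t F hF,
    meas_eq hμ (s ∪ t) (E ∩ F) ((hE.mono Finset.subset_union_left).inter
      (hF.mono Finset.subset_union_right)),
    patFor_card_union hst hE hF, Finset.card_union_of_disjoint hst, pow_add]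
  push_cast
  ring


/-- the coordinate block of round `r`. -/
def blk (γ r : ℕ) : Finset ℕ := Finset.Ico (γ ^ (r - 1)) (γ ^ r)

lemma pow_le_pow_blk {γ : ℕ} (hγ : 1 ≤ γ) (r : ℕ) : γ ^ (r - 1) ≤ γ ^ r :=
  Nat.pow_le_pow_right hγ (Nat.sub_le r 1)

lemma blockIncr_eq_sum {γ : ℕ} (hγ : 1 ≤ γ) (r : ℕ) (X : ℕ → Bool) :
    blockIncr γ r X = ∑ i ∈ blk γ r, ((X i).toNat : ℝ) := by
  rw [blk, Finset.sum_Ico_eq_sub _ (pow_le_pow_blk hγ r)]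
  rfl

lemma blk_disjoint {γ : ℕ} (hγ : 1 ≤ γ) {r r' : ℕ} (h : r ≠ r') :
    Disjoint (blk γ r) (blk γ r') := by
  wlog hlt : r < r' generalizing r r'
  · exact (this h.symm (by omega)).symm
  apply Finset.disjoint_left.2
  intro i hi hi'
  simp only [blk, Finset.mem_Ico] at hi hi'
  have : γ ^ r ≤ γ ^ (r' - 1) := Nat.pow_le_pow_right hγ (by omega)
  omega

lemma dependsOn_event {γ : ℕ} (hγ : 1 ≤ γ) (η : ℝ) (r : ℕ) :
    DependsOn (blk γ r) (lowerLILEvent η γ r) := by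
  intro X
  have : blockIncr γ r (mask (blk γ r) X) = blockIncr γ r X := by
    rw [blockIncr_eq_sum hγ, blockIncr_eq_sum hγ]
    exact Finset.sum_congr rfl fun i hi => by simp [mask, hi]
  simp only [lowerLILEvent, Set.mem_setOf_eq, this]

lemma measurableSet_event (η : ℝ) (γ r : ℕ) : MeasurableSet (lowerLILEvent η γ r) := by
  have hbi : Measurable (blockIncr γ r) := by
    have hcs : ∀ n, Measurable fun X : ℕ → Bool => coinSum X n := fun n =>
      Finset.measurable_sum _ fun i _ =>
        (measurable_from_top (f := fun b : Bool => ((b.toNat : ℝ)))).comp (measurable_pi_apply i)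
    exact (hcs _).sub (hcs _)
  exact measurableSet_lt measurable_const ((hbi.sub measurable_const))

lemma dependsOn_biInter {u : Finset ℕ} {ι : Type*} (t : Finset ι) (s : ι → Finset ℕ)
    (E : ι → Set (ℕ → Bool)) (h : ∀ i ∈ t, DependsOn (s i) (E i)) (hs : ∀ i ∈ t, s i ⊆ u) :
    DependsOn u (⋂ i ∈ t, E i) := by
  intro X
  simp only [Set.mem_iInter]
  exact forall₂_congr fun i hi => ((h i hi).mono (hs i hi)) X

theorem indep {μ : Measure (ℕ → Bool)} (hμ : IsFairCoin μ) (η : ℝ) {γ : ℕ} (hγ : 1 ≤ γ) :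
    ProbabilityTheory.iIndepSet (fun r : ℕ => lowerLILEvent η γ r) μ := by
  rw [ProbabilityTheory.iIndepSet_iff_meas_biInter (fun r => measurableSet_event η γ r)]
  intro t
  induction t using Finset.induction_on with
  | empty =>
    haveI := hμ.1
    simp
  | @insert a t ha ih =>
    rw [Finset.prod_insert ha, ← ih, Finset.set_biInter_insert]
    exact meas_inter hμ (Finset.disjoint_biUnion_right _ _ _ |>.2
        fun r hr => blk_disjoint hγ (by rintro rfl; exact ha hr))
      (dependsOn_event hγ η a)
      (dependsOn_biInter t (blk γ) _ (fun i _ => dependsOn_event hγ η i)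
        (fun i hi => Finset.subset_biUnion_of_mem _ hi))


lemma card_sum_eq (s : Finset ℕ) (j : ℕ) :
    ((patterns s).filter (fun f => (∑ i ∈ s, (f i).toNat) = j)).card = s.card.choose j := by
  rw [← Finset.card_powersetCard j s]
  apply Finset.card_bij' (fun f _ => s.filter (fun i => f i = true))
    (fun u _ => fun i => decide (i ∈ u))
  · intro f hf
    obtain ⟨hf1, hf2⟩ := Finset.mem_filter.1 hf
    refine Finset.mem_powersetCard.2 ⟨Finset.filter_subset _ _, ?_⟩
    rw [Finset.card_filter, ← hf2]
    exact Finset.sum_congr rfl fun i _ => by cases f i <;> simp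
  · intro u hu
    obtain ⟨hu1, hu2⟩ := Finset.mem_powersetCard.1 hu
    refine Finset.mem_filter.2 ⟨mem_patterns.2 fun i hi => by
      simp only [decide_eq_false_iff_not]; exact fun h => hi (hu1 h), ?_⟩
    calc ∑ i ∈ s, (decide (i ∈ u)).toNat
        = (s.filter (fun i => i ∈ u)).card := by
          rw [Finset.card_filter]
          exact Finset.sum_congr rfl fun i _ => by by_cases h : i ∈ u <;> simp [h]
      _ = j := by rw [Finset.filter_mem_eq_inter, Finset.inter_eq_right.2 hu1, hu2]
  · intro f hf
    obtain ⟨hf1, -⟩ := Finset.mem_filter.1 hf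
    funext i
    by_cases hi : i ∈ s
    · by_cases hfi : f i = true <;> simp [Finset.mem_filter, hi, hfi]
    · simp [Finset.mem_filter, hi, mem_patterns.1 hf1 i hi]
  · intro u hu
    obtain ⟨hu1, -⟩ := Finset.mem_powersetCard.1 hu
    ext i
    simp only [Finset.mem_filter, decide_eq_true_eq]
    exact ⟨fun h => h.2, fun h => ⟨hu1 h, h⟩⟩

lemma choose_mono_le_half {n : ℕ} {a b : ℕ} (h : a ≤ b) (hb : b ≤ n / 2) :
    n.choose a ≤ n.choose b := by
  induction b, h using Nat.le_induction with
  | base => exact le_rfl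
  | succ b hab ih =>
    exact (ih (by omega)).trans (Nat.choose_le_succ_of_lt_half_left (by omega))

lemma choose_anti {M a b : ℕ} (h1 : M ≤ a) (h2 : a ≤ b) (h3 : b ≤ 2 * M) :
    (2 * M).choose b ≤ (2 * M).choose a := by
  have ha : a ≤ 2 * M := h2.trans h3
  rw [← Nat.choose_symm ha, ← Nat.choose_symm h3]
  exact choose_mono_le_half (by omega) (by omega)

lemma count_ge {γ r : ℕ} (hγ : 1 ≤ γ) (η : ℝ) {M k0 k1 : ℕ}
    (hM : γ ^ r - γ ^ (r - 1) = 2 * M)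
    (hk01 : k0 ≤ k1) (hk1 : k1 ≤ M)
    (hk0 : η * Real.sqrt (((γ:ℝ) ^ r / 2) * Real.log (Real.log ((γ:ℝ) ^ r))) < k0) :
    (k1 - k0 + 1) * (2 * M).choose (M + k1)
      ≤ (patFor (blk γ r) (lowerLILEvent η γ r)).card := by
  classical
  have hble : γ ^ (r - 1) ≤ γ ^ r := pow_le_pow_blk hγ r
  have hcard_blk : (blk γ r).card = 2 * M := by rw [blk, Nat.card_Ico, hM]
  set s := blk γ r with hs
  set U : Finset (ℕ → Bool) := (Finset.Icc (M + k0) (M + k1)).biUnion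
    (fun j => (patterns s).filter (fun f => (∑ i ∈ s, (f i).toNat) = j)) with hU
  have hsub : U ⊆ patFor s (lowerLILEvent η γ r) := by
    intro f hf
    obtain ⟨j, hj, hfj⟩ := Finset.mem_biUnion.1 hf
    obtain ⟨hj1, hj2⟩ := Finset.mem_Icc.1 hj
    obtain ⟨hf1, hf2⟩ := Finset.mem_filter.1 hfj
    refine mem_patFor.2 ⟨hf1, ?_⟩
    show η * Real.sqrt _ < blockIncr γ r f - _
    have hbi : blockIncr γ r f = (j : ℝ) := by
      rw [blockIncr_eq_sum hγ, ← hs, ← hf2]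
      push_cast
      rfl
    have hsub2 : ((γ ^ r : ℕ) : ℝ) - ((γ ^ (r - 1) : ℕ) : ℝ) = (2 * M : ℕ) := by
      rw [← Nat.cast_sub hble, hM]
    rw [hbi, hsub2]
    have hj1' : (M : ℝ) + k0 ≤ j := by exact_mod_cast hj1
    push_cast
    linarith
  calc (k1 - k0 + 1) * (2 * M).choose (M + k1)
      = (Finset.Icc (M + k0) (M + k1)).card * (2 * M).choose (M + k1) := by
        rw [Nat.card_Icc]; congr 1; omega
    _ ≤ ∑ j ∈ Finset.Icc (M + k0) (M + k1), (2 * M).choose j := by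
        have h := Finset.card_nsmul_le_sum (Finset.Icc (M + k0) (M + k1))
          (fun j => (2 * M).choose j) ((2 * M).choose (M + k1)) (fun j hj => by
            obtain ⟨h1, h2⟩ := Finset.mem_Icc.1 hj
            exact choose_anti (by omega) h2 (by omega))
        simpa [smul_eq_mul] using h
    _ = U.card := by
        rw [hU, Finset.card_biUnion]
        · refine (Finset.sum_congr rfl fun j _ => ?_).symm
          rw [card_sum_eq s j, hs, hcard_blk]
        · intro j hj j' hj' hjj'
          apply Finset.disjoint_left.2
          intro f hf hf'
          exact hjj' (((Finset.mem_filter.1 hf).2.symm).trans (Finset.mem_filter.1 hf').2)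
    _ ≤ (patFor s (lowerLILEvent η γ r)).card := Finset.card_le_card hsub


lemma sixteen_pow_le (M : ℕ) (hM : 1 ≤ M) :
    (16 : ℝ) ^ M ≤ 4 * M * ((2 * M).choose M : ℝ) ^ 2 := by
  induction M, hM using Nat.le_induction with
  | base => norm_num
  | succ M hM ih =>
    have key : ((M : ℝ) + 1) * ((2 * (M + 1)).choose (M + 1) : ℝ)
        = 2 * (2 * M + 1) * ((2 * M).choose M : ℝ) := by
      have := Nat.succ_mul_centralBinom_succ M
      rw [Nat.centralBinom, Nat.centralBinom] at this
      exact_mod_cast congrArg (Nat.cast : ℕ → ℝ) this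
    set C : ℝ := ((2 * M).choose M : ℝ) with hC
    set C' : ℝ := ((2 * (M + 1)).choose (M + 1) : ℝ) with hC'
    have hMpos : (0 : ℝ) < (M : ℝ) + 1 := by positivity
    have hCnn : (0 : ℝ) ≤ C := Nat.cast_nonneg _
    have hsq : ((M : ℝ) + 1) ^ 2 * C' ^ 2 = 4 * (2 * M + 1) ^ 2 * C ^ 2 := by
      have := congrArg (· ^ 2) key
      simp only [mul_pow] at this
      nlinarith [this]
    have h2 : 16 * 16 ^ M * ((M : ℝ) + 1) ≤ 16 * (2 * (M : ℝ) + 1) ^ 2 * C ^ 2 := by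
      nlinarith [mul_le_mul_of_nonneg_right ih (le_of_lt hMpos), sq_nonneg C,
        mul_le_mul_of_nonneg_right
          (show 4 * (M : ℝ) * ((M : ℝ) + 1) ≤ (2 * M + 1) ^ 2 by nlinarith) (sq_nonneg C)]
    have h3 : ((M : ℝ) + 1) * (16 ^ (M + 1)) ≤ ((M : ℝ) + 1) * (4 * ((M : ℝ) + 1) * C' ^ 2) := by
      rw [pow_succ]
      nlinarith [hsq, h2]
    have h4 := le_of_mul_le_mul_left h3 hMpos
    push_cast
    linarith [h4]

lemma central_binom_lower (M : ℕ) (hM : 1 ≤ M) :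
    (4 : ℝ) ^ M / (2 * Real.sqrt M) ≤ ((2 * M).choose M : ℝ) := by
  have hMp : (0 : ℝ) < M := by exact_mod_cast hM
  have hsp : 0 < 2 * Real.sqrt M := by positivity
  rw [div_le_iff₀ hsp]
  have h1 : ((4 : ℝ) ^ M) = Real.sqrt ((16 : ℝ) ^ M) := by
    rw [show (16 : ℝ) ^ M = ((4 : ℝ) ^ M) ^ 2 by rw [← pow_mul, mul_comm, pow_mul]; norm_num,
      Real.sqrt_sq (by positivity)]
  rw [h1]
  calc Real.sqrt ((16 : ℝ) ^ M) ≤ Real.sqrt (4 * M * ((2 * M).choose M : ℝ) ^ 2) :=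
        Real.sqrt_le_sqrt (sixteen_pow_le M hM)
    _ = ((2 * M).choose M : ℝ) * (2 * Real.sqrt M) := by
        rw [show 4 * (M : ℝ) * ((2 * M).choose M : ℝ) ^ 2
            = (((2 * M).choose M : ℝ) * (2 * Real.sqrt M)) ^ 2 by
          rw [mul_pow, mul_pow, Real.sq_sqrt hMp.le]; ring]
        exact Real.sqrt_sq (by positivity)

lemma choose_ratio (M : ℕ) : ∀ k : ℕ, k + 1 ≤ M →
    ((2 * M).choose M : ℝ) * Real.exp (-((k : ℝ) * (k + 1)) / ((M : ℝ) - k))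
      ≤ ((2 * M).choose (M + k) : ℝ) := by
  intro k
  induction k with
  | zero => intro h; simp
  | succ k ih =>
    intro hk
    have hkM : (k : ℝ) + 2 ≤ M := by exact_mod_cast hk
    have ihh := ih (by omega)
    set C0 : ℝ := ((2 * M).choose M : ℝ)
    set Ck : ℝ := ((2 * M).choose (M + k) : ℝ)
    set Ck1 : ℝ := ((2 * M).choose (M + k + 1) : ℝ)
    have hC0 : (0 : ℝ) ≤ C0 := Nat.cast_nonneg _
    have hx : (0 : ℝ) < (M : ℝ) - k := by linarith
    have hx1 : (0 : ℝ) < (M : ℝ) - k - 1 := by linarith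
    have hden : (0 : ℝ) < (M : ℝ) + k + 1 := by positivity
    have hrec : Ck1 * ((M : ℝ) + k + 1) = Ck * ((M : ℝ) - k) := by
      have hn : (2 * M).choose (M + k + 1) * (M + k + 1) = (2 * M).choose (M + k) * (M - k) := by
        have := Nat.choose_succ_right_eq (2 * M) (M + k)
        rwa [show 2 * M - (M + k) = M - k by omega] at this
      have := congrArg (Nat.cast : ℕ → ℝ) hn
      push_cast [Nat.cast_sub (show k ≤ M by omega)] at this
      linarith [this]
    -- key exponential inequality
    set A : ℝ := (k : ℝ) * (k + 1) / ((M : ℝ) - k)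
    set A' : ℝ := ((k : ℝ) + 1) * ((k : ℝ) + 2) / ((M : ℝ) - (k + 1))
    have hAA : (2 * (k : ℝ) + 1) / ((M : ℝ) - k) ≤ A' - A := by
      have h1 : ((k : ℝ) + 1) * ((k : ℝ) + 2) / ((M : ℝ) - k) ≤ A' := by
        apply div_le_div_of_nonneg_left (by positivity) (by linarith) (by push_cast; linarith)
      have h2 : A' - A ≥ ((k : ℝ) + 1) * ((k : ℝ) + 2) / ((M : ℝ) - k)
          - (k : ℝ) * (k + 1) / ((M : ℝ) - k) := by
        simp only [A]
        linarith
      calc (2 * (k : ℝ) + 1) / ((M : ℝ) - k)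
          ≤ (2 * (k : ℝ) + 2) / ((M : ℝ) - k) := by
            gcongr
            linarith
        _ = ((k : ℝ) + 1) * ((k : ℝ) + 2) / ((M : ℝ) - k)
            - (k : ℝ) * (k + 1) / ((M : ℝ) - k) := by
            rw [div_sub_div_same]; congr 1; ring
        _ ≤ A' - A := h2
    have hexp : ((M : ℝ) + k + 1) / ((M : ℝ) - k) ≤ Real.exp (A' - A) := by
      have : ((M : ℝ) + k + 1) / ((M : ℝ) - k) = 1 + (2 * (k : ℝ) + 1) / ((M : ℝ) - k) := by
        field_simp
        ring
      rw [this]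
      calc 1 + (2 * (k : ℝ) + 1) / ((M : ℝ) - k)
          ≤ Real.exp ((2 * (k : ℝ) + 1) / ((M : ℝ) - k)) := by
            have := Real.add_one_le_exp ((2 * (k : ℝ) + 1) / ((M : ℝ) - k))
            linarith
        _ ≤ Real.exp (A' - A) := Real.exp_le_exp.2 hAA
    -- exp(-A') * (M+k+1) ≤ (M-k) * exp(-A)
    have hkey : Real.exp (-A') * ((M : ℝ) + k + 1) ≤ ((M : ℝ) - k) * Real.exp (-A) := by
      have h4 : ((M : ℝ) + k + 1) ≤ ((M : ℝ) - k) * Real.exp (A' - A) := by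
        rw [div_le_iff₀ hx] at hexp
        linarith [hexp]
      calc Real.exp (-A') * ((M : ℝ) + k + 1)
          ≤ Real.exp (-A') * (((M : ℝ) - k) * Real.exp (A' - A)) := by
            apply mul_le_mul_of_nonneg_left h4 (Real.exp_nonneg _)
        _ = ((M : ℝ) - k) * (Real.exp (-A') * Real.exp (A' - A)) := by ring
        _ = ((M : ℝ) - k) * Real.exp (-A) := by
            rw [← Real.exp_add]
            congr 1
            ring
    have goal' : C0 * Real.exp (-A') ≤ Ck1 := by
      have ihh' : C0 * Real.exp (-A) ≤ Ck := by
        simpa only [A, neg_div] using ihh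
      have t1 := mul_le_mul_of_nonneg_left hkey hC0
      have t2 := mul_le_mul_of_nonneg_right ihh' hx.le
      have t3 : C0 * Real.exp (-A') * ((M : ℝ) + k + 1) ≤ Ck1 * ((M : ℝ) + k + 1) := by
        nlinarith [t1, t2, hrec]
      exact le_of_mul_le_mul_right t3 hden
    have harg : -((((k : ℕ) + 1 : ℕ) : ℝ) * ((((k : ℕ) + 1 : ℕ) : ℝ) + 1))
        / ((M : ℝ) - (((k : ℕ) + 1 : ℕ) : ℝ)) = -A' := by
      simp only [A']
      rw [neg_div]
      push_cast
      ring_nf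
    rw [harg]
    exact goal'

lemma per_r {μ : Measure (ℕ → Bool)} (hμ : IsFairCoin μ) {γ : ℕ} (hγ : 2 ≤ γ) (η : ℝ)
    {r M k0 k1 : ℕ}
    (hM : γ ^ r - γ ^ (r - 1) = 2 * M) (hM1 : 1 ≤ M)
    (hk0 : η * Real.sqrt (((γ:ℝ) ^ r / 2) * Real.log (Real.log ((γ:ℝ) ^ r))) < k0)
    (hk1def : k1 = k0 + ⌈Real.sqrt M⌉₊)
    (hk1M : k1 + 1 ≤ M) :
    Real.exp (-(((k1:ℝ) * (k1 + 1)) / ((M:ℝ) - k1))) / 2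
      ≤ (μ (lowerLILEvent η γ r)).toReal := by
  have hγ1 : 1 ≤ γ := by omega
  have hcard_blk : (blk γ r).card = 2 * M := by rw [blk, Nat.card_Ico, hM]
  have hmeas : μ (lowerLILEvent η γ r)
      = ((patFor (blk γ r) (lowerLILEvent η γ r)).card : ENNReal) * (1 / 2) ^ (2 * M) := by
    rw [meas_eq hμ _ _ (dependsOn_event hγ1 η r), hcard_blk]
  have htoReal : (μ (lowerLILEvent η γ r)).toReal
      = ((patFor (blk γ r) (lowerLILEvent η γ r)).card : ℝ) * (1 / 2 : ℝ) ^ (2 * M) := by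
    rw [hmeas, ENNReal.toReal_mul, ENNReal.toReal_pow]
    simp
  have hk01 : k0 ≤ k1 := hk1def ▸ Nat.le_add_right _ _
  have a2 : ((k1 - k0 + 1 : ℕ) : ℝ) * ((2 * M).choose (M + k1) : ℝ)
      ≤ ((patFor (blk γ r) (lowerLILEvent η γ r)).card : ℝ) := by
    have h := count_ge hγ1 η hM hk01 (by omega) hk0
    exact_mod_cast h
  have a3 : Real.sqrt M ≤ ((k1 - k0 + 1 : ℕ) : ℝ) := by
    have h1 : k1 - k0 + 1 = ⌈Real.sqrt M⌉₊ + 1 := by omega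
    rw [h1]
    push_cast
    have := Nat.le_ceil (Real.sqrt M)
    linarith
  have a4 : ((2 * M).choose M : ℝ)
      * Real.exp (-(((k1:ℝ) * (k1 + 1)) / ((M:ℝ) - k1)))
      ≤ ((2 * M).choose (M + k1) : ℝ) := by
    have h := choose_ratio M k1 hk1M
    rw [neg_div] at h
    exact h
  set T : ℝ := ((patFor (blk γ r) (lowerLILEvent η γ r)).card : ℝ)
  set p : ℝ := (1 / 2 : ℝ) ^ (2 * M)
  have hp : 0 < p := by positivity
  set E : ℝ := ((k1:ℝ) * (k1 + 1)) / ((M:ℝ) - k1)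
  set sM : ℝ := Real.sqrt M
  have hsM : 0 < sM := Real.sqrt_pos.2 (by exact_mod_cast hM1)
  set CM : ℝ := ((2 * M).choose M : ℝ)
  set CK : ℝ := ((2 * M).choose (M + k1) : ℝ)
  have a5 : (4:ℝ) ^ M / (2 * sM) ≤ CM := central_binom_lower M hM1
  have hCK : (0:ℝ) ≤ CK := Nat.cast_nonneg _
  have hexp : (0:ℝ) ≤ Real.exp (-E) := Real.exp_nonneg _
  have h1 : (4:ℝ) ^ M * p = 1 := by
    have : p = ((1/2:ℝ)^2) ^ M := by rw [← pow_mul]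
    rw [this, ← mul_pow]
    norm_num
  have chain1 : sM * (CM * Real.exp (-E)) * p ≤ T * p := by
    apply mul_le_mul_of_nonneg_right ?_ hp.le
    calc sM * (CM * Real.exp (-E)) ≤ sM * CK := by
          apply mul_le_mul_of_nonneg_left a4 hsM.le
      _ ≤ ((k1 - k0 + 1 : ℕ) : ℝ) * CK := mul_le_mul_of_nonneg_right a3 hCK
      _ ≤ T := a2
  have chain2 : sM * ((4:ℝ) ^ M / (2 * sM) * Real.exp (-E)) * p
      ≤ sM * (CM * Real.exp (-E)) * p := by
    apply mul_le_mul_of_nonneg_right ?_ hp.le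
    apply mul_le_mul_of_nonneg_left ?_ hsM.le
    exact mul_le_mul_of_nonneg_right a5 hexp
  have hfin : sM * ((4:ℝ) ^ M / (2 * sM) * Real.exp (-E)) * p
      = ((4:ℝ) ^ M * p) * (Real.exp (-E) / 2) := by
    field_simp
  rw [htoReal]
  calc Real.exp (-E) / 2 = ((4:ℝ) ^ M * p) * (Real.exp (-E) / 2) := by rw [h1]; ring
    _ = sM * ((4:ℝ) ^ M / (2 * sM) * Real.exp (-E)) * p := hfin.symm
    _ ≤ sM * (CM * Real.exp (-E)) * p := chain2
    _ ≤ T * p := chain1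

/-- `log log γ^r`. -/
def Lf (γ : ℕ) (r : ℕ) : ℝ := Real.log (Real.log ((γ:ℝ) ^ r))

/-- the threshold. -/
noncomputable def thrf (η : ℝ) (γ r : ℕ) : ℝ := η * Real.sqrt (((γ:ℝ) ^ r / 2) * Lf γ r)

/-- half the block length. -/
def Mf (γ r : ℕ) : ℕ := (γ ^ r - γ ^ (r - 1)) / 2

/-- upper envelope for `k₁ + 1`. -/
noncomputable def Gf (η : ℝ) (γ r : ℕ) : ℝ := thrf η γ r + Real.sqrt (Mf γ r) + 3

/-- scale constant. -/
noncomputable def c1 (γ : ℕ) : ℝ := ((γ:ℝ) - 1) / (2 * γ)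

variable {γ : ℕ} {η : ℝ}

lemma even_exact (hγ : 2 ≤ γ) {r : ℕ} (hr : 2 ≤ r) :
    γ ^ r - γ ^ (r - 1) = 2 * Mf γ r := by
  suffices h : 2 ∣ (γ ^ r - γ ^ (r - 1)) by
    rw [Mf]; omega
  have hpow : γ ^ r = γ ^ (r - 1) * γ := by
    rw [← pow_succ]; congr 1; omega
  have hdiff : γ ^ r - γ ^ (r - 1) = γ ^ (r - 1) * (γ - 1) := by
    have h2 : γ ^ (r - 1) * (γ - 1) + γ ^ (r - 1) * 1 = γ ^ (r - 1) * γ := by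
      rw [← Nat.mul_add]; congr 1; omega
    omega
  rw [hdiff]
  rcases Nat.even_or_odd γ with he | ho
  · exact Dvd.dvd.mul_right (dvd_pow he.two_dvd (by omega)) _
  · have : Even (γ - 1) := Nat.Odd.sub_odd ho odd_one
    exact (this.mul_left _).two_dvd

lemma Mf_real (hγ : 2 ≤ γ) : ∀ᶠ r : ℕ in atTop, (Mf γ r : ℝ) = c1 γ * (γ:ℝ) ^ r := by
  have hγ0 : (0:ℝ) < γ := by positivity
  filter_upwards [eventually_ge_atTop 2] with r hr
  have h := even_exact hγ hr
  have hble : γ ^ (r - 1) ≤ γ ^ r := pow_le_pow_blk (by omega) r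
  have h1 : (Mf γ r : ℝ) = (((γ ^ r - γ ^ (r - 1)) : ℕ) : ℝ) / 2 := by
    rw [h]; push_cast; ring
  rw [h1, Nat.cast_sub hble]
  have hpow : (γ:ℝ) ^ (r - 1) * γ = (γ:ℝ) ^ r := by
    rw [← pow_succ]; congr 1; omega
  rw [c1]
  push_cast
  field_simp
  linear_combination (-1 : ℝ) * hpow

lemma Mf_tendsto (hγ : 2 ≤ γ) : Tendsto (fun r => (Mf γ r : ℝ)) atTop atTop := by
  have hγR : (1:ℝ) < γ := by exact_mod_cast hγ
  have hc1 : 0 < c1 γ := by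
    rw [c1]
    apply div_pos (by linarith) (by positivity)
  exact ((tendsto_pow_atTop_atTop_of_one_lt hγR).const_mul_atTop hc1).congr'
    ((Mf_real hγ).mono fun r h => h.symm)

lemma logr_tendsto : Tendsto (fun r : ℕ => Real.log r) atTop atTop :=
  Real.tendsto_log_atTop.comp tendsto_natCast_atTop_atTop

lemma L_eq (hγ : 2 ≤ γ) : ∀ᶠ r : ℕ in atTop,
    Lf γ r = Real.log r + Real.log (Real.log γ) := by
  have hγR : (1:ℝ) < γ := by exact_mod_cast hγ
  filter_upwards [eventually_ge_atTop 1] with r hr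
  have hr0 : (0:ℝ) < r := by exact_mod_cast hr
  rw [Lf, Real.log_pow, Real.log_mul hr0.ne' (Real.log_pos hγR).ne']

lemma L_div_log (hγ : 2 ≤ γ) :
    Tendsto (fun r : ℕ => Lf γ r / Real.log r) atTop (nhds 1) := by
  have base : Tendsto (fun r : ℕ => 1 + Real.log (Real.log γ) / Real.log r) atTop
      (nhds (1 + 0)) :=
    tendsto_const_nhds.add (tendsto_const_nhds.div_atTop logr_tendsto)
  rw [add_zero] at base
  apply base.congr'
  filter_upwards [L_eq hγ, logr_tendsto.eventually_gt_atTop 0] with r hL hlog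
  rw [hL, add_div, div_self hlog.ne']

lemma r_div_M (hγ : 2 ≤ γ) :
    Tendsto (fun r : ℕ => (r:ℝ) / (Mf γ r : ℝ)) atTop (nhds 0) := by
  have hγR : (1:ℝ) < γ := by exact_mod_cast hγ
  have hc1 : 0 < c1 γ := by
    rw [c1]
    apply div_pos (by linarith) (by positivity)
  have base : Tendsto (fun r : ℕ => (1 / c1 γ) * ((r:ℝ) ^ 1 / (γ:ℝ) ^ r)) atTop
      (nhds ((1 / c1 γ) * 0)) :=
    (tendsto_pow_const_div_const_pow_of_one_lt 1 hγR).const_mul _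
  rw [mul_zero] at base
  apply base.congr'
  filter_upwards [Mf_real hγ] with r hM
  have hγr : (0:ℝ) < (γ:ℝ) ^ r := by positivity
  rw [hM, pow_one]
  field_simp

lemma L_div_M (hγ : 2 ≤ γ) :
    Tendsto (fun r : ℕ => Lf γ r / (Mf γ r : ℝ)) atTop (nhds 0) := by
  have hlogM : Tendsto (fun r : ℕ => Real.log r / (Mf γ r : ℝ)) atTop (nhds 0) := by
    apply squeeze_zero' ?_ ?_ (r_div_M hγ)
    · filter_upwards [(Mf_tendsto hγ).eventually_gt_atTop 0, eventually_ge_atTop 1]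
        with r hM hr
      have : (0:ℝ) ≤ Real.log r := Real.log_natCast_nonneg r
      positivity
    · filter_upwards [(Mf_tendsto hγ).eventually_gt_atTop 0, eventually_ge_atTop 1]
        with r hM hr
      have hr0 : (0:ℝ) < r := by exact_mod_cast hr
      have : Real.log r ≤ (r:ℝ) := (Real.log_le_sub_one_of_pos hr0).trans (by linarith)
      exact div_le_div_of_nonneg_right this hM.le
  have base : Tendsto (fun r : ℕ => Real.log r / (Mf γ r : ℝ)
      + Real.log (Real.log γ) / (Mf γ r : ℝ)) atTop (nhds (0 + 0)) :=
    hlogM.add (tendsto_const_nhds.div_atTop (Mf_tendsto hγ))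
  rw [add_zero] at base
  apply base.congr'
  filter_upwards [L_eq hγ] with r hL
  rw [hL, add_div]

lemma thr_eq (hγ : 2 ≤ γ) (hη0 : 0 < η) {α : ℝ} (hα : α = η ^ 2 * γ / ((γ:ℝ) - 1)) :
    ∀ᶠ r : ℕ in atTop, thrf η γ r = Real.sqrt (α * (Mf γ r : ℝ) * Lf γ r) := by
  have hγ0 : (0:ℝ) < γ := by positivity
  have hγ1 : (0:ℝ) < (γ:ℝ) - 1 := by
    have : (1:ℝ) < γ := by exact_mod_cast hγ
    linarith
  filter_upwards [Mf_real hγ] with r hM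
  rw [thrf, ← Real.sqrt_sq hη0.le, ← Real.sqrt_mul (sq_nonneg η)]
  congr 1
  rw [hM, hα, c1]
  field_simp

lemma L_pos (hγ : 2 ≤ γ) : ∀ᶠ r : ℕ in atTop, 0 < Lf γ r := by
  have h := (L_div_log hγ).eventually (eventually_gt_nhds (by norm_num : (1/2:ℝ) < 1))
  filter_upwards [h, logr_tendsto.eventually_gt_atTop 0] with r h1 h2
  by_contra hneg
  push_neg at hneg
  have : Lf γ r / Real.log r ≤ 0 := div_nonpos_of_nonpos_of_nonneg hneg h2.le
  linarith

lemma N_tendsto (hγ : 2 ≤ γ) (hη0 : 0 < η) {α : ℝ}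
    (hα : α = η ^ 2 * γ / ((γ:ℝ) - 1)) (hα0 : 0 ≤ α) :
    Tendsto (fun r : ℕ => Gf η γ r / Real.sqrt ((Mf γ r : ℝ) * Real.log r)) atTop
      (nhds (Real.sqrt α)) := by
  have h1 : Tendsto (fun r : ℕ => thrf η γ r / Real.sqrt ((Mf γ r : ℝ) * Real.log r)) atTop
      (nhds (Real.sqrt α)) := by
    have base : Tendsto (fun r : ℕ => Real.sqrt (α * (Lf γ r / Real.log r))) atTop
        (nhds (Real.sqrt (α * 1))) := (tendsto_const_nhds.mul (L_div_log hγ)).sqrt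
    rw [mul_one] at base
    apply base.congr'
    filter_upwards [thr_eq hγ hη0 hα, (Mf_tendsto hγ).eventually_gt_atTop 0,
      logr_tendsto.eventually_gt_atTop 0, L_pos hγ] with r ht hM hlog hL
    rw [ht, ← Real.sqrt_div (by positivity) ((Mf γ r : ℝ) * Real.log r)]
    congr 1
    field_simp
  have h2 : Tendsto (fun r : ℕ => Real.sqrt (Mf γ r : ℝ)
      / Real.sqrt ((Mf γ r : ℝ) * Real.log r)) atTop (nhds 0) := by
    have base : Tendsto (fun r : ℕ => Real.sqrt ((1:ℝ) / Real.log r)) atTop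
        (nhds (Real.sqrt 0)) := (tendsto_const_nhds.div_atTop logr_tendsto).sqrt
    rw [Real.sqrt_zero] at base
    apply base.congr'
    filter_upwards [(Mf_tendsto hγ).eventually_gt_atTop 0,
      logr_tendsto.eventually_gt_atTop 0] with r hM hlog
    rw [← Real.sqrt_div (by positivity) ((Mf γ r : ℝ) * Real.log r)]
    congr 1
    field_simp
  have h3 : Tendsto (fun r : ℕ => (3:ℝ) / Real.sqrt ((Mf γ r : ℝ) * Real.log r)) atTop
      (nhds 0) := by
    have base : Tendsto (fun r : ℕ => (3:ℝ) * Real.sqrt (((Mf γ r : ℝ) * Real.log r)⁻¹))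
        atTop (nhds (3 * Real.sqrt 0)) :=
      tendsto_const_nhds.mul ((((Mf_tendsto hγ).atTop_mul_atTop₀
        logr_tendsto).inv_tendsto_atTop).sqrt)
    rw [Real.sqrt_zero, mul_zero] at base
    apply base.congr (fun r => ?_)
    rw [Real.sqrt_inv]
    ring
  have := (h1.add h2).add h3
  rw [add_zero, add_zero] at this
  apply this.congr (fun r => ?_)
  rw [← add_div, ← add_div, Gf]

lemma Nsq_tendsto (hγ : 2 ≤ γ) (hη0 : 0 < η) {α : ℝ}
    (hα : α = η ^ 2 * γ / ((γ:ℝ) - 1)) (hα0 : 0 ≤ α) :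
    Tendsto (fun r : ℕ => Gf η γ r ^ 2 / ((Mf γ r : ℝ) * Real.log r)) atTop (nhds α) := by
  have base := (N_tendsto hγ hη0 hα hα0).mul (N_tendsto hγ hη0 hα hα0)
  rw [Real.mul_self_sqrt hα0] at base
  apply base.congr'
  filter_upwards [(Mf_tendsto hγ).eventually_gt_atTop 0,
    logr_tendsto.eventually_gt_atTop 0] with r hM hlog
  rw [div_mul_div_comm, Real.mul_self_sqrt (by positivity), sq]

lemma GM_tendsto (hγ : 2 ≤ γ) (hη0 : 0 < η) {α : ℝ}
    (hα : α = η ^ 2 * γ / ((γ:ℝ) - 1)) (hα0 : 0 ≤ α) :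
    Tendsto (fun r : ℕ => Gf η γ r / (Mf γ r : ℝ)) atTop (nhds 0) := by
  have h1 : Tendsto (fun r : ℕ => thrf η γ r / (Mf γ r : ℝ)) atTop (nhds 0) := by
    have base : Tendsto (fun r : ℕ => Real.sqrt (α * (Lf γ r / (Mf γ r : ℝ)))) atTop
        (nhds (Real.sqrt (α * 0))) := (tendsto_const_nhds.mul (L_div_M hγ)).sqrt
    rw [mul_zero, Real.sqrt_zero] at base
    apply base.congr'
    filter_upwards [thr_eq hγ hη0 hα, (Mf_tendsto hγ).eventually_gt_atTop 0, L_pos hγ]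
      with r ht hM hL
    have harg : α * (Lf γ r / (Mf γ r : ℝ))
        = (α * (Mf γ r : ℝ) * Lf γ r) / ((Mf γ r : ℝ)) ^ 2 := by
      field_simp
    rw [ht, harg, Real.sqrt_div (mul_nonneg (mul_nonneg hα0 hM.le) hL.le),
      Real.sqrt_sq hM.le]
  have h2 : Tendsto (fun r : ℕ => Real.sqrt (Mf γ r : ℝ) / (Mf γ r : ℝ)) atTop (nhds 0) := by
    have base : Tendsto (fun r : ℕ => Real.sqrt ((1:ℝ) / (Mf γ r : ℝ))) atTop
        (nhds (Real.sqrt 0)) := (tendsto_const_nhds.div_atTop (Mf_tendsto hγ)).sqrt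
    rw [Real.sqrt_zero] at base
    apply base.congr'
    filter_upwards [(Mf_tendsto hγ).eventually_gt_atTop 0] with r hM
    have harg : (1:ℝ) / (Mf γ r : ℝ) = (Mf γ r : ℝ) / ((Mf γ r : ℝ)) ^ 2 := by
      rw [sq]
      field_simp
    rw [harg, Real.sqrt_div hM.le, Real.sqrt_sq hM.le]
  have h3 : Tendsto (fun r : ℕ => (3:ℝ) / (Mf γ r : ℝ)) atTop (nhds 0) :=
    tendsto_const_nhds.div_atTop (Mf_tendsto hγ)
  have := (h1.add h2).add h3
  rw [add_zero, add_zero] at this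
  apply this.congr (fun r => ?_)
  rw [← add_div, ← add_div, Gf]

set_option maxHeartbeats 2000000 in
lemma diverges {μ : Measure (ℕ → Bool)} (hμ : IsFairCoin μ) (hγ : 2 ≤ γ) (hη0 : 0 < η)
    (hη1 : η < 1) (hγη : η < ((γ:ℝ) - 1) / γ) :
    ∑' r : ℕ, μ (lowerLILEvent η γ r) = ⊤ := by
  haveI := hμ.1
  by_contra hfin
  have hsum : Summable (fun r : ℕ => (μ (lowerLILEvent η γ r)).toReal) :=
    ENNReal.summable_toReal hfin
  have hγR : (1:ℝ) < γ := by exact_mod_cast hγ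
  have hγ0 : (0:ℝ) < γ := by linarith
  have hγ1R : (0:ℝ) < (γ:ℝ) - 1 := by linarith
  set α : ℝ := η ^ 2 * γ / ((γ:ℝ) - 1) with hαdef
  have hα0 : 0 < α := div_pos (mul_pos (pow_pos hη0 2) hγ0) hγ1R
  have hα1 : α < 1 := by
    have h1 : η * γ < (γ:ℝ) - 1 := (lt_div_iff₀ hγ0).1 hγη
    have h2 : η * γ / ((γ:ℝ) - 1) < 1 := (div_lt_one hγ1R).2 h1
    calc α = η * (η * γ / ((γ:ℝ) - 1)) := by rw [hαdef]; ring
      _ < η * 1 := by exact mul_lt_mul_of_pos_left h2 hη0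
      _ < 1 := by linarith
  set β : ℝ := (α + 1) / 2 with hβdef
  have hβ1 : β < 1 := by rw [hβdef]; linarith
  have hαβ : α < β := by rw [hβdef]; linarith
  set β'' : ℝ := (α + β) / 2 with hβ''def
  have hβ''0 : 0 < β'' := by rw [hβ''def]; linarith
  have hαβ'' : α < β'' := by rw [hβ''def]; linarith
  have hβ''β : β'' < β := by rw [hβ''def]; linarith
  set δ : ℝ := (β'' - α) / (2 * β'') with hδdef
  have hδ0 : 0 < δ := div_pos (by linarith) (by linarith)
  have hδh : δ < 1 / 2 := by
    rw [hδdef, div_lt_iff₀ (by linarith)]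
    linarith
  have hδkey : α < (1 - δ) * β'' := by
    have h : (1 - δ) * β'' = (β'' + α) / 2 := by
      rw [hδdef]
      field_simp
      ring
    rw [h]; linarith
  have e1 := (GM_tendsto hγ hη0 hαdef hα0.le).eventually_lt_const hδ0
  have e2 := (Nsq_tendsto hγ hη0 hαdef hα0.le).eventually_lt_const hδkey
  have e3 : ∀ᶠ r : ℕ in atTop, Real.log 2 ≤ (β - β'') * Real.log r :=
    (logr_tendsto.const_mul_atTop (by linarith : (0:ℝ) < β - β'')).eventually_ge_atTop _
  have e4 := (Mf_tendsto hγ).eventually_ge_atTop 4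
  have hbound : ∀ᶠ r : ℕ in atTop, (r:ℝ) ^ (-β) ≤ (μ (lowerLILEvent η γ r)).toReal := by
    filter_upwards [e1, e2, e3, e4, logr_tendsto.eventually_gt_atTop 0,
      eventually_ge_atTop 2] with r h1 h2 h3 h4 hlp hr2
    have hMe : γ ^ r - γ ^ (r - 1) = 2 * Mf γ r := even_exact hγ hr2
    have hMR : (0:ℝ) < (Mf γ r : ℝ) := by linarith
    have hM1 : 1 ≤ Mf γ r := by
      have : (1:ℝ) ≤ (Mf γ r : ℝ) := by linarith
      exact_mod_cast this
    have hthr0 : 0 ≤ thrf η γ r := mul_nonneg hη0.le (Real.sqrt_nonneg _)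
    have hthrk0 : thrf η γ r < ((⌊thrf η γ r⌋₊ + 1 : ℕ) : ℝ) := by
      push_cast
      exact Nat.lt_floor_add_one _
    set k1 : ℕ := (⌊thrf η γ r⌋₊ + 1) + ⌈Real.sqrt (Mf γ r : ℝ)⌉₊ with hk1def
    have hk1G : (k1:ℝ) + 1 ≤ Gf η γ r := by
      have hfl : ((⌊thrf η γ r⌋₊ : ℕ) : ℝ) ≤ thrf η γ r := Nat.floor_le hthr0
      have hcl : ((⌈Real.sqrt (Mf γ r : ℝ)⌉₊ : ℕ) : ℝ) < Real.sqrt (Mf γ r : ℝ) + 1 :=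
        Nat.ceil_lt_add_one (Real.sqrt_nonneg _)
      rw [hk1def, Gf]
      push_cast
      linarith
    have hGpos0 : 0 ≤ Gf η γ r := by
      rw [Gf]
      have := Real.sqrt_nonneg ((Mf γ r : ℝ))
      linarith
    have hGδM : Gf η γ r ≤ δ * (Mf γ r : ℝ) := by
      rw [div_lt_iff₀ hMR] at h1
      linarith
    have hGhalf : Gf η γ r ≤ (Mf γ r : ℝ) / 2 := by nlinarith
    have hk1real : (k1:ℝ) + 2 ≤ (Mf γ r : ℝ) := by linarith
    have hk1M : k1 + 1 ≤ Mf γ r := by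
      have : ((k1 + 1 : ℕ) : ℝ) ≤ (Mf γ r : ℝ) := by push_cast; linarith
      exact_mod_cast this
    have hMk1 : (0:ℝ) < (Mf γ r : ℝ) - (k1:ℝ) := by linarith
    have hk1nn : (0:ℝ) ≤ (k1:ℝ) := Nat.cast_nonneg _
    have hnum : (k1:ℝ) * ((k1:ℝ) + 1) ≤ Gf η γ r ^ 2 := by nlinarith
    have hMG : (0:ℝ) < (Mf γ r : ℝ) - Gf η γ r := by linarith
    have hEb : ((k1:ℝ) * ((k1:ℝ) + 1)) / ((Mf γ r : ℝ) - (k1:ℝ))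
        ≤ Gf η γ r ^ 2 / ((Mf γ r : ℝ) - Gf η γ r) :=
      div_le_div₀ (sq_nonneg _) hnum hMG (by linarith)
    have hE2 : Gf η γ r ^ 2 / ((Mf γ r : ℝ) - Gf η γ r) ≤ β'' * Real.log r := by
      rw [div_le_iff₀ hMG]
      have hpos : (0:ℝ) < (Mf γ r : ℝ) * Real.log r := mul_pos hMR hlp
      have h2' : Gf η γ r ^ 2 ≤ (1 - δ) * β'' * ((Mf γ r : ℝ) * Real.log r) := by
        rw [div_lt_iff₀ hpos] at h2
        linarith
      have hMGge : (1 - δ) * (Mf γ r : ℝ) ≤ (Mf γ r : ℝ) - Gf η γ r := by nlinarith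
      calc Gf η γ r ^ 2 ≤ (1 - δ) * β'' * ((Mf γ r : ℝ) * Real.log r) := h2'
        _ = β'' * ((1 - δ) * (Mf γ r : ℝ)) * Real.log r := by ring
        _ ≤ β'' * ((Mf γ r : ℝ) - Gf η γ r) * Real.log r :=
            mul_le_mul_of_nonneg_right (mul_le_mul_of_nonneg_left hMGge hβ''0.le) hlp.le
        _ = β'' * Real.log r * ((Mf γ r : ℝ) - Gf η γ r) := by ring
    have hEfin : ((k1:ℝ) * ((k1:ℝ) + 1)) / ((Mf γ r : ℝ) - (k1:ℝ)) + Real.log 2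
        ≤ β * Real.log r := by
      have hEβ'' := hEb.trans hE2
      linarith
    have hper := per_r hμ hγ η hMe hM1 hthrk0 hk1def hk1M
    have hr0 : (0:ℝ) < (r:ℝ) := by
      have : (2:ℝ) ≤ (r:ℝ) := by exact_mod_cast hr2
      linarith
    calc (r:ℝ) ^ (-β) = Real.exp (Real.log r * (-β)) := by
          rw [Real.rpow_def_of_pos hr0]
      _ = Real.exp (-(β * Real.log r)) := by ring_nf
      _ ≤ Real.exp (-(((k1:ℝ) * ((k1:ℝ) + 1)) / ((Mf γ r : ℝ) - (k1:ℝ)) + Real.log 2)) :=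
          Real.exp_le_exp.2 (by linarith)
      _ = Real.exp (-(((k1:ℝ) * ((k1:ℝ) + 1)) / ((Mf γ r : ℝ) - (k1:ℝ)))) / 2 := by
          rw [neg_add, Real.exp_add, Real.exp_neg (Real.log 2),
            Real.exp_log (by norm_num : (0:ℝ) < 2)]
          ring
      _ ≤ _ := hper
  obtain ⟨R, hR⟩ := eventually_atTop.1 hbound
  have hs1 : Summable (fun n : ℕ => (μ (lowerLILEvent η γ (n + R))).toReal) :=
    (summable_nat_add_iff R).2 hsum
  have hs2 : Summable (fun n : ℕ => ((n + R : ℕ) : ℝ) ^ (-β)) :=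
    Summable.of_nonneg_of_le (fun n => Real.rpow_nonneg (Nat.cast_nonneg _) _)
      (fun n => hR (n + R) (Nat.le_add_left R n)) hs1
  have hs3 : Summable (fun n : ℕ => (n:ℝ) ^ (-β)) :=
    (summable_nat_add_iff (f := fun n : ℕ => (n:ℝ) ^ (-β)) R).1 hs2
  have hs4 : Summable (fun n : ℕ => ((n:ℝ) ^ β)⁻¹) :=
    hs3.congr fun n => Real.rpow_neg (Nat.cast_nonneg n) β
  have hcontra := Real.summable_nat_rpow_inv.1 hs4
  linarith

end
end LILaux

open ProbabilityTheory in
/-- Divergence of the lower-LIL events: for `0 < η < 1` and a natural number `γ ≥ 2`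
with `(γ − 1)/γ > η`, the events `A_r` are mutually independent and `Σ_r μ(A_r) = ∞`. -/
theorem lowerLILEvent_indep_and_divergent (μ : Measure (ℕ → Bool)) (hμ : IsFairCoin μ)
    (η : ℝ) (hη0 : 0 < η) (hη1 : η < 1)
    (γ : ℕ) (hγ : 2 ≤ γ) (hγη : η < ((γ : ℝ) - 1) / γ) :
    iIndepSet (fun r : ℕ => lowerLILEvent η γ r) μ ∧
    ∑' r : ℕ, μ (lowerLILEvent η γ r) = ⊤ :=
  ⟨LILaux.indep hμ η (by omega), LILaux.diverges hμ hγ hη0 hη1 hγη⟩
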